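/- Let m₂ ≤ −2 and m₁ be integers with 2m₁ > −3m₂. For each natural number n set c₃(n) = (−3/2 + m₁ + m₂ + (1 + m₂)n)/(1 − 2m₁ − 2m₂), let k₁(n) be an integer at minimal distance from c₃(n) (either choice at ties), and set δ(n) = Q(n, k₁(n), k₁(n)) if c₃(n) ∉ 1/2 + ℤ, and δ(n) = Q(n, k₁(n), k₁(n)) − (c₃(n) + 1/2) if c₃(n) ∈ 1/2 + ℤ. Then there exist an integer N and a periodic function D : ℕ → ℚ such that for all n ≥ N, δ(n−1) + (n−1)/2 = A·n² + B(n)·n + D(n), where A = (2m₁ + 3m₂)²/(2(2m₁ + 2m₂ − 1)), and B(n) = (2m₁ − 5)(1 + m₂)/(2(2m₁ + 2m₂ − 1)) if (−1 + (1 + m₂)(n − 1))/(2m₁ + 2m₂ − 1) ∉ ℤ, while B(n) = (2m₁ − 3)(1 + m₂)/(2(2m₁ + 2m₂ − 1)) if (−1 + (1 + m₂)(n − 1))/(2m₁ + 2m₂ − 1) ∈ ℤ; moreover B(n) < 0 for all n. (Case C-2 of Theorem 6.2 on 2-fusion knots.) -/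

import Mathlib

/-- The Garoufalidis–van der Veen degree function `Q(n, k₁, k₂)` for the 2-fusion
knot `K(m₁, m₂)`. -/
def Q (m₁ m₂ : ℤ) (n k₁ k₂ : ℚ) : ℚ :=
  let μ : ℚ := min (2 * k₁ + n) (min (2 * k₁ + k₂ + n) (k₂ + 2 * n))
  k₁ / 2 - 3 * k₁ ^ 2 / 2 - 3 * k₁ * k₂ - k₂ ^ 2 - (m₁ : ℚ) * k₁ - (m₁ : ℚ) * k₁ ^ 2
    - (m₂ : ℚ) * k₂ - (m₂ : ℚ) * k₂ ^ 2 - 6 * k₁ * n - 3 * k₂ * n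
    + 2 * (m₁ : ℚ) * n + 4 * (m₂ : ℚ) * n - (m₂ : ℚ) * k₂ * n
    - 2 * n ^ 2 + (m₁ : ℚ) * n ^ 2 + 2 * (m₂ : ℚ) * n ^ 2
    + ((1 + 8 * k₁ + 4 * k₂ + 8 * n) * μ - 3 * μ ^ 2) / 2

lemma Qmu (m₁ m₂ : ℤ) (n x : ℚ) (h0 : 0 ≤ x) (h1 : x ≤ n) :
    Q m₁ m₂ n x x =
  x / 2 - 3 * x ^ 2 / 2 - 3 * x * x - x ^ 2 - (m₁ : ℚ) * x - (m₁ : ℚ) * x ^ 2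
    - (m₂ : ℚ) * x - (m₂ : ℚ) * x ^ 2 - 6 * x * n - 3 * x * n
    + 2 * (m₁ : ℚ) * n + 4 * (m₂ : ℚ) * n - (m₂ : ℚ) * x * n
    - 2 * n ^ 2 + (m₁ : ℚ) * n ^ 2 + 2 * (m₂ : ℚ) * n ^ 2
    + ((1 + 8 * x + 4 * x + 8 * n) * (2 * x + n) - 3 * (2 * x + n) ^ 2) / 2 := by
  simp only [Q]
  rw [min_eq_left (le_min (by linarith) (by linarith))]

set_option maxHeartbeats 2000000 in
/-- Case C-2 of Theorem 6.2 of Kalfagianni–Tran on 2-fusion knots. -/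
theorem statement12 (m₁ m₂ : ℤ) (hm₂ : m₂ ≤ -2) (hm₁ : -(3 * m₂) < 2 * m₁)
    (c₃ : ℕ → ℚ)
    (hc₃ : ∀ n : ℕ, c₃ n = (-(3 / 2) + (m₁ : ℚ) + (m₂ : ℚ) + (1 + (m₂ : ℚ)) * n) /
      (1 - 2 * (m₁ : ℚ) - 2 * (m₂ : ℚ)))
    (k₁ : ℕ → ℤ)
    (hk₁near : ∀ n : ℕ, ∀ j : ℤ, |c₃ n - (k₁ n : ℚ)| ≤ |c₃ n - (j : ℚ)|)
    (δ : ℕ → ℚ)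
    (hδ₁ : ∀ n : ℕ, (¬ ∃ z : ℤ, c₃ n = 1 / 2 + (z : ℚ)) →
      δ n = Q m₁ m₂ (n : ℚ) (k₁ n : ℚ) (k₁ n : ℚ))
    (hδ₂ : ∀ n : ℕ, (∃ z : ℤ, c₃ n = 1 / 2 + (z : ℚ)) →
      δ n = Q m₁ m₂ (n : ℚ) (k₁ n : ℚ) (k₁ n : ℚ) - (c₃ n + 1 / 2))
    (B : ℕ → ℚ)
    (hB : ∀ n : ℕ, B n =
      if (2 * m₁ + 2 * m₂ - 1 : ℤ) ∣ (-1 + (1 + m₂) * ((n : ℤ) - 1)) then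
        (2 * (m₁ : ℚ) - 3) * (1 + (m₂ : ℚ)) /
          (2 * (2 * (m₁ : ℚ) + 2 * (m₂ : ℚ) - 1))
      else
        (2 * (m₁ : ℚ) - 5) * (1 + (m₂ : ℚ)) /
          (2 * (2 * (m₁ : ℚ) + 2 * (m₂ : ℚ) - 1))) :
    ∃ (N : ℕ) (D : ℕ → ℚ) (π : ℕ), 0 < π ∧ (∀ n : ℕ, D (n + π) = D n) ∧
      (∀ n : ℕ, N ≤ n →
        δ (n - 1) + ((n : ℚ) - 1) / 2 =
          ((2 * (m₁ : ℚ) + 3 * (m₂ : ℚ)) ^ 2 /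
              (2 * (2 * (m₁ : ℚ) + 2 * (m₂ : ℚ) - 1))) * (n : ℚ) ^ 2 +
          B n * (n : ℚ) + D n) ∧
      (∀ n : ℕ, B n < 0) := by
  classical
  have hm₂Q : (m₂ : ℚ) ≤ -2 := by exact_mod_cast hm₂
  have h13Z : (1 : ℤ) ≤ 2 * m₁ + 3 * m₂ := by omega
  have h13 : (1 : ℚ) ≤ 2 * (m₁ : ℚ) + 3 * (m₂ : ℚ) := by exact_mod_cast h13Z
  have hdZ : (2 : ℤ) ≤ 2 * m₁ + 2 * m₂ - 1 := by omega
  have hdQ : (2 : ℚ) ≤ 2 * (m₁ : ℚ) + 2 * (m₂ : ℚ) - 1 := by exact_mod_cast hdZ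
  have hneg : 1 - 2 * (m₁ : ℚ) - 2 * (m₂ : ℚ) < 0 := by linarith
  have hdne : 1 - 2 * (m₁ : ℚ) - 2 * (m₂ : ℚ) ≠ 0 := ne_of_lt hneg
  have haQ : (7 : ℚ) / 2 ≤ (m₁ : ℚ) := by linarith
  set π : ℕ := (2 * m₁ + 2 * m₂ - 1).toNat with hπdef
  have hπpos : 0 < π := by omega
  have hπQ : (π : ℚ) = 2 * (m₁ : ℚ) + 2 * (m₂ : ℚ) - 1 := by
    have : ((π : ℤ) : ℚ) = ((2 * m₁ + 2 * m₂ - 1 : ℤ) : ℚ) := by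
      congr 1; omega
    push_cast at this
    exact this
  -- shift of c₃ by one period
  have hshift : ∀ m : ℕ, c₃ (m + π) = c₃ m - (1 + (m₂ : ℚ)) := by
    intro m
    rw [hc₃, hc₃]
    have hcast : ((m + π : ℕ) : ℚ) = (m : ℚ) + (2 * (m₁ : ℚ) + 2 * (m₂ : ℚ) - 1) := by
      push_cast [hπQ]; ring
    rw [hcast]
    field_simp
    ring
  -- periodicity of the squared distance
  have hsq : ∀ m : ℕ, (c₃ (m + π) - (k₁ (m + π) : ℚ)) ^ 2 = (c₃ m - (k₁ m : ℚ)) ^ 2 := by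
    intro m
    have e1 : c₃ (m + π) - ((k₁ m - (1 + m₂) : ℤ) : ℚ) = c₃ m - (k₁ m : ℚ) := by
      rw [hshift]; push_cast; ring
    have e2 : c₃ m - ((k₁ (m + π) + (1 + m₂) : ℤ) : ℚ) = c₃ (m + π) - (k₁ (m + π) : ℚ) := by
      rw [hshift]; push_cast; ring
    have h1 := hk₁near (m + π) (k₁ m - (1 + m₂))
    have h2 := hk₁near m (k₁ (m + π) + (1 + m₂))
    rw [e1] at h1
    rw [e2] at h2
    have habs : |c₃ (m + π) - (k₁ (m + π) : ℚ)| = |c₃ m - (k₁ m : ℚ)| := le_antisymm h1 h2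
    rw [← sq_abs, habs, sq_abs]
  -- periodicity of the tie condition
  have htie : ∀ m : ℕ, (∃ z : ℤ, c₃ (m + π) = 1 / 2 + (z : ℚ)) ↔
      (∃ z : ℤ, c₃ m = 1 / 2 + (z : ℚ)) := by
    intro m
    rw [hshift]
    constructor
    · rintro ⟨z, hz⟩
      exact ⟨z + (1 + m₂), by push_cast; linarith⟩
    · rintro ⟨z, hz⟩
      exact ⟨z - (1 + m₂), by rw [hz]; push_cast; ring⟩
  -- tie condition is the divisibility condition
  have htied : ∀ m : ℕ, (∃ z : ℤ, c₃ m = 1 / 2 + (z : ℚ)) ↔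
      (2 * m₁ + 2 * m₂ - 1 : ℤ) ∣ (-1 + (1 + m₂) * (m : ℤ)) := by
    intro m
    rw [hc₃]
    constructor
    · rintro ⟨z, hz⟩
      refine ⟨-z - 1, ?_⟩
      have key : (-1 : ℚ) + (1 + (m₂ : ℚ)) * (m : ℚ) =
          (2 * (m₁ : ℚ) + 2 * (m₂ : ℚ) - 1) * (-(z : ℚ) - 1) := by
        rw [div_eq_iff hdne] at hz
        linarith [hz]
      exact_mod_cast key
    · rintro ⟨u, hu⟩
      refine ⟨-u - 1, ?_⟩
      have huQ : (-1 : ℚ) + (1 + (m₂ : ℚ)) * (m : ℚ) =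
          (2 * (m₁ : ℚ) + 2 * (m₂ : ℚ) - 1) * (u : ℚ) := by exact_mod_cast hu
      rw [div_eq_iff hdne]
      push_cast
      linarith [huQ]
  refine ⟨2 * m₁.toNat + 2,
    fun n => (29 + 8 * (m₂ : ℚ) - 32 * (m₂ : ℚ) ^ 2 - 20 * (m₁ : ℚ) - 48 * (m₁ : ℚ) * (m₂ : ℚ)
        - 12 * (m₁ : ℚ) ^ 2) / (8 * (2 * (m₁ : ℚ) + 2 * (m₂ : ℚ) - 1))
      + ((1 - 2 * (m₁ : ℚ) - 2 * (m₂ : ℚ)) / 2) * (c₃ (n + π - 1) - (k₁ (n + π - 1) : ℚ)) ^ 2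
      + (if ∃ z : ℤ, c₃ (n + π - 1) = 1 / 2 + (z : ℚ) then
          -((m₂ : ℚ) + 2) / (2 * (m₁ : ℚ) + 2 * (m₂ : ℚ) - 1) else 0),
    π, hπpos, ?_, ?_, ?_⟩
  · -- periodicity of D
    intro n
    have hidx : n + π + π - 1 = (n + π - 1) + π := by omega
    simp only [hidx, hsq]
    by_cases ht : ∃ z : ℤ, c₃ (n + π - 1) = 1 / 2 + (z : ℚ)
    · rw [if_pos (((htie (n + π - 1))).mpr ht), if_pos ht]
    · rw [if_neg (fun h => ht ((htie (n + π - 1)).mp h)), if_neg ht]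
  · -- main formula
    intro n hn
    set m := n - 1 with hmdef
    have hn1 : 1 ≤ n := by omega
    have hmn : m + 1 = n := by omega
    have hmQ : (m : ℚ) = (n : ℚ) - 1 := by
      have : ((m : ℕ) : ℚ) + 1 = (n : ℚ) := by exact_mod_cast congrArg (Nat.cast : ℕ → ℚ) hmn
      linarith
    have hmZ : (2 * m₁ + 1 : ℤ) ≤ (m : ℤ) := by omega
    have hmaQ : 2 * (m₁ : ℚ) + 1 ≤ (m : ℚ) := by exact_mod_cast hmZ
    -- bounds on c₃ m
    have hclo : 1 / 2 ≤ c₃ m := by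
      rw [hc₃, le_div_iff_of_neg hneg]
      nlinarith [mul_nonneg (by linarith : (0:ℚ) ≤ (m : ℚ) - (2 * (m₁:ℚ) + 1))
        (by linarith : (0:ℚ) ≤ -1 - (m₂:ℚ)),
        mul_nonneg (by linarith : (0:ℚ) ≤ (m₁:ℚ)) (by linarith : (0:ℚ) ≤ -2 - (m₂:ℚ))]
    have hchi : c₃ m ≤ (m : ℚ) - 1 / 2 := by
      rw [hc₃, div_le_iff_of_neg hneg]
      nlinarith [mul_nonneg (by linarith : (0:ℚ) ≤ (m : ℚ) - 1)
        (by linarith : (0:ℚ) ≤ 2 * (m₁:ℚ) + 3 * (m₂:ℚ) - 1)]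
    have hxabs : |c₃ m - (k₁ m : ℚ)| ≤ 1 / 2 :=
      (hk₁near m (round (c₃ m))).trans (abs_sub_round _)
    have hxb := abs_le.mp hxabs
    have hx0 : (0 : ℚ) ≤ (k₁ m : ℚ) := by linarith [hxb.1, hxb.2]
    have hx1 : (k₁ m : ℚ) ≤ (m : ℚ) := by linarith [hxb.1, hxb.2]
    have hQv := Qmu m₁ m₂ (m : ℚ) (k₁ m : ℚ) hx0 hx1
    have hidx : n + π - 1 = m + π := by omega
    have hcond : ((2 * m₁ + 2 * m₂ - 1 : ℤ) ∣ (-1 + (1 + m₂) * ((n : ℤ) - 1))) ↔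
        (∃ z : ℤ, c₃ m = 1 / 2 + (z : ℚ)) := by
      rw [show ((n : ℤ) - 1) = (m : ℤ) by omega]
      exact (htied m).symm
    simp only [hidx, hsq, htie]
    by_cases ht : ∃ z : ℤ, c₃ m = 1 / 2 + (z : ℚ)
    · rw [hδ₂ m ht, hQv, hB n, if_pos (hcond.mpr ht), if_pos ht, hc₃ m, hmQ]
      have hd' : 2 * ((m₁ : ℚ) + (m₂ : ℚ)) - 1 ≠ 0 := by linarith
      field_simp
      ring
    · rw [hδ₁ m ht, hQv, hB n, if_neg (fun h => ht (hcond.mp h)), if_neg ht, hc₃ m, hmQ]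
      have hd' : 2 * ((m₁ : ℚ) + (m₂ : ℚ)) - 1 ≠ 0 := by linarith
      field_simp
      ring
  · -- B < 0
    intro n
    rw [hB n]
    split_ifs
    · apply div_neg_of_neg_of_pos
      · nlinarith
      · linarith
    · apply div_neg_of_neg_of_pos
      · nlinarith
      · linarith
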